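/- Let A, B, W be square-integrable real random variables on a common probability space with E[A] = E[B] = E[W] = 0, E[A²] = E[B²] = E[W²] = 1, and Cov(B, W) = 0. Then E[(A − B)²] ≥ 2 − 2√(1 − Cov(A, W)²). -/

import Mathlib

open MeasureTheory

private lemma mul_integrable_of_memL2 {Ω : Type*} [MeasurableSpace Ω] {μ : Measure Ω}
    {f g : Ω → ℝ} (hf : MemLp f 2 μ) (hg : MemLp g 2 μ) :
    Integrable (fun ω => f ω * g ω) μ := by
  have h : Integrable (fun ω => (((f ω + g ω) ^ 2 - f ω ^ 2) - g ω ^ 2) * (1/2)) μ :=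
    (((hf.add hg).integrable_sq.sub hf.integrable_sq).sub hg.integrable_sq).mul_const _
  refine h.congr (Filter.Eventually.of_forall fun ω => ?_)
  ring

/-- Abstract out-of-distribution loss lower bound: if `A, B, W` are
square-integrable, centered with unit second moment, and `Cov(B, W) = 0`, then
`E[(A − B)²] ≥ 2 − 2√(1 − Cov(A, W)²)`. -/
theorem ood_loss_lower_bound
    {Ω : Type*} [MeasurableSpace Ω] (μ : Measure Ω) [IsProbabilityMeasure μ]
    (A B W : Ω → ℝ)
    (hA : MemLp A 2 μ) (hB : MemLp B 2 μ) (hW : MemLp W 2 μ)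
    (hAmean : ∫ ω, A ω ∂μ = 0) (hBmean : ∫ ω, B ω ∂μ = 0) (hWmean : ∫ ω, W ω ∂μ = 0)
    (hA2 : ∫ ω, (A ω) ^ 2 ∂μ = 1) (hB2 : ∫ ω, (B ω) ^ 2 ∂μ = 1)
    (hW2 : ∫ ω, (W ω) ^ 2 ∂μ = 1)
    (hBW : ∫ ω, B ω * W ω ∂μ = 0) :
    2 - 2 * Real.sqrt (1 - (∫ ω, A ω * W ω ∂μ) ^ 2) ≤ ∫ ω, (A ω - B ω) ^ 2 ∂μ := by
  set b : ℝ := ∫ ω, A ω * B ω ∂μ with hb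
  set c : ℝ := ∫ ω, A ω * W ω ∂μ with hc
  have hAB : Integrable (fun ω => A ω * B ω) μ := mul_integrable_of_memL2 hA hB
  have hAW : Integrable (fun ω => A ω * W ω) μ := mul_integrable_of_memL2 hA hW
  have hBWi : Integrable (fun ω => B ω * W ω) μ := mul_integrable_of_memL2 hB hW
  have hA2i : Integrable (fun ω => A ω ^ 2) μ := hA.integrable_sq
  have hB2i : Integrable (fun ω => B ω ^ 2) μ := hB.integrable_sq
  have hW2i : Integrable (fun ω => W ω ^ 2) μ := hW.integrable_sq
  -- Bessel: ∫ (A - bB - cW)² = 1 - b² - c² ≥ 0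
  have key : ∫ ω, (A ω - b * B ω - c * W ω) ^ 2 ∂μ = 1 - b ^ 2 - c ^ 2 := by
    have heq : ∀ ω, (A ω - b * B ω - c * W ω) ^ 2
        = (((((A ω ^ 2 + b ^ 2 * B ω ^ 2) + c ^ 2 * W ω ^ 2) - (2 * b) * (A ω * B ω))
            - (2 * c) * (A ω * W ω)) + (2 * b * c) * (B ω * W ω)) := by
      intro ω; ring
    rw [integral_congr_ae (Filter.Eventually.of_forall heq)]
    have i1 : Integrable (fun ω => A ω ^ 2 + b ^ 2 * B ω ^ 2) μ :=
      hA2i.add (hB2i.const_mul _)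
    have i2 : Integrable (fun ω => A ω ^ 2 + b ^ 2 * B ω ^ 2 + c ^ 2 * W ω ^ 2) μ :=
      i1.add (hW2i.const_mul _)
    have i3 : Integrable
        (fun ω => A ω ^ 2 + b ^ 2 * B ω ^ 2 + c ^ 2 * W ω ^ 2 - 2 * b * (A ω * B ω)) μ :=
      i2.sub (hAB.const_mul _)
    have i4 : Integrable (fun ω => A ω ^ 2 + b ^ 2 * B ω ^ 2 + c ^ 2 * W ω ^ 2
        - 2 * b * (A ω * B ω) - 2 * c * (A ω * W ω)) μ := i3.sub (hAW.const_mul _)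
    rw [integral_add i4 (hBWi.const_mul _), integral_sub i3 (hAW.const_mul _),
        integral_sub i2 (hAB.const_mul _), integral_add i1 (hW2i.const_mul _),
        integral_add hA2i (hB2i.const_mul _),
        integral_const_mul, integral_const_mul, integral_const_mul, integral_const_mul,
        integral_const_mul, hA2, hB2, hW2, hBW, ← hb, ← hc]
    ring
  have hnonneg : 0 ≤ 1 - b ^ 2 - c ^ 2 := by
    rw [← key]
    exact integral_nonneg fun ω => sq_nonneg _
  have hble : b ≤ Real.sqrt (1 - c ^ 2) := by
    calc b ≤ |b| := le_abs_self b
    _ = Real.sqrt (b ^ 2) := (Real.sqrt_sq_eq_abs b).symm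
    _ ≤ Real.sqrt (1 - c ^ 2) := Real.sqrt_le_sqrt (by linarith)
  have hexp : ∫ ω, (A ω - B ω) ^ 2 ∂μ = 2 - 2 * b := by
    have heq : ∀ ω, (A ω - B ω) ^ 2 = (A ω ^ 2 + B ω ^ 2) - 2 * (A ω * B ω) := by
      intro ω; ring
    have j1 : Integrable (fun ω => A ω ^ 2 + B ω ^ 2) μ := hA2i.add hB2i
    rw [integral_congr_ae (Filter.Eventually.of_forall heq),
        integral_sub j1 (hAB.const_mul _),
        integral_add hA2i hB2i, integral_const_mul, hA2, hB2, ← hb]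
    ring
  rw [hexp]
  linarith
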